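/- Let m ≥ 1 and l > k ≥ 0 be natural numbers, and let A = ℝ^l_m be the truncated polynomial algebra, i.e. the quotient of the polynomial ring ℝ[ξ₁,…,ξ_m] by the (l+1)-st power of the ideal generated by the variables, with maximal ideal 𝔪_A generated by the classes of the variables. Then the annihilator ideal of 𝔪_A^{k+1} in A equals 𝔪_A^{l−k}: Ann(𝔪_A^{k+1}) = 𝔪_A^{l−k}. -/

import Mathlib

noncomputable section

/-- The ideal of `ℝ[ξ₁,…,ξ_m]` generated by the variables. -/
def varIdeal (m : ℕ) : Ideal (MvPolynomial (Fin m) ℝ) :=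
  Ideal.span (Set.range MvPolynomial.X)

/-- The truncated polynomial algebra `ℝ^l_m = ℝ[ξ₁,…,ξ_m]/𝔪^{l+1}`. -/
abbrev TruncPolyAlg (m l : ℕ) : Type :=
  MvPolynomial (Fin m) ℝ ⧸ (varIdeal m) ^ (l + 1)

/-- The maximal ideal of `ℝ^l_m`, the image of the ideal of variables. -/
def truncMaxIdeal (m l : ℕ) : Ideal (TruncPolyAlg m l) :=
  (varIdeal m).map (Ideal.Quotient.mk ((varIdeal m) ^ (l + 1)))

open MvPolynomial Finsupp

lemma deg_add {m : ℕ} (s t : Fin m →₀ ℕ) :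
    Finsupp.degree (s + t) = Finsupp.degree s + Finsupp.degree t := by
  simp [Finsupp.degree_eq_weight_one, map_add]

lemma deg_single {m : ℕ} (i : Fin m) (k : ℕ) :
    Finsupp.degree (Finsupp.single i k) = k := by
  classical
  rcases eq_or_ne k 0 with rfl | hk
  · simp
  · simp [Finsupp.degree_apply, Finsupp.support_single_ne_zero _ hk]

lemma varIdeal_pow_eq (m n : ℕ) :
    (varIdeal m) ^ n =
      Ideal.span ((fun s => monomial s (1 : ℝ)) ''
        {s : Fin m →₀ ℕ | n ≤ Finsupp.degree s}) := by
  induction n with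
  | zero =>
    rw [pow_zero, Ideal.one_eq_top]
    symm
    rw [Ideal.eq_top_iff_one]
    exact Ideal.subset_span ⟨0, by simp, by simp⟩
  | succ n ih =>
    rw [pow_succ]
    apply le_antisymm
    · rw [ih, varIdeal, Ideal.span_mul_span', Ideal.span_le]
      rintro _ ⟨_, ⟨s, hs, rfl⟩, _, ⟨i, rfl⟩, rfl⟩
      show monomial s (1 : ℝ) * monomial (Finsupp.single i 1) 1 ∈ _
      rw [monomial_mul, mul_one]
      apply Ideal.subset_span
      refine ⟨s + Finsupp.single i 1, ?_, rfl⟩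
      simp only [Set.mem_setOf_eq] at hs ⊢
      rw [deg_add, deg_single]
      omega
    · rw [Ideal.span_le]
      rintro _ ⟨s, hs, rfl⟩
      simp only [Set.mem_setOf_eq] at hs
      show monomial s (1 : ℝ) ∈ varIdeal m ^ n * varIdeal m
      have hs0 : s ≠ 0 := by
        intro h
        rw [h, map_zero] at hs
        omega
      obtain ⟨i, hi⟩ : ∃ i, s i ≠ 0 := by
        by_contra h
        push_neg at h
        exact hs0 (Finsupp.ext fun i => h i)
      have hle : Finsupp.single i 1 ≤ s := by
        intro j
        rcases eq_or_ne j i with rfl | hji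
        · simpa using Nat.one_le_iff_ne_zero.mpr hi
        · simp [Finsupp.single_apply, Ne.symm hji]
      have hsplit : (s - Finsupp.single i 1) + Finsupp.single i 1 = s :=
        tsub_add_cancel_of_le hle
      have : (monomial s (1 : ℝ)) =
          monomial (s - Finsupp.single i 1) (1 : ℝ) * X i := by
        rw [X, monomial_mul, mul_one, hsplit]
      rw [this]
      apply Submodule.mul_mem_mul
      · rw [ih]
        apply Ideal.subset_span
        refine ⟨s - Finsupp.single i 1, ?_, rfl⟩
        have := deg_add (s - Finsupp.single i 1) (Finsupp.single i 1)
        rw [hsplit, deg_single] at this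
        simp only [Set.mem_setOf_eq]
        omega
      · exact Ideal.subset_span ⟨i, rfl⟩

lemma mem_varIdeal_pow {m n : ℕ} {f : MvPolynomial (Fin m) ℝ} :
    f ∈ (varIdeal m) ^ n ↔ ∀ d ∈ f.support, n ≤ Finsupp.degree d := by
  rw [varIdeal_pow_eq, mem_ideal_span_monomial_image]
  constructor
  · intro h d hd
    obtain ⟨si, hsi, hle⟩ := h d hd
    refine le_trans hsi ?_
    have := deg_add si (d - si)
    rw [add_tsub_cancel_of_le hle] at this
    omega
  · intro h d hd
    exact ⟨d, h d hd, le_rfl⟩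

set_option synthInstance.maxHeartbeats 1000000 in
set_option maxHeartbeats 1000000 in
/-- For `m ≥ 1` and `l > k ≥ 0`, in `A = ℝ^l_m` one has
`Ann(𝔪_A^{k+1}) = 𝔪_A^{l-k}`. -/
theorem annihilator_pow_truncMaxIdeal (m l k : ℕ) (hm : 1 ≤ m) (hkl : k < l) :
    (truncMaxIdeal m l ^ (k + 1)).annihilator = truncMaxIdeal m l ^ (l - k) := by
  classical
  have hmap : ∀ j : ℕ, truncMaxIdeal m l ^ j =
      (varIdeal m ^ j).map (Ideal.Quotient.mk (varIdeal m ^ (l + 1))) := fun j =>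
    (Ideal.map_pow _ _ _).symm
  apply le_antisymm
  · intro x hx
    obtain ⟨f, rfl⟩ := Ideal.Quotient.mk_surjective x
    rw [hmap]
    apply Ideal.mem_map_of_mem
    rw [mem_varIdeal_pow]
    intro d hd
    -- use that f * X i ^ (k+1) ∈ I ^ (l+1)
    set i : Fin m := ⟨0, hm⟩
    have hXi : (X i : MvPolynomial (Fin m) ℝ) ∈ varIdeal m :=
      Ideal.subset_span ⟨i, rfl⟩
    have hXmem : (X i : MvPolynomial (Fin m) ℝ) ^ (k + 1) ∈ varIdeal m ^ (k + 1) :=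
      Ideal.pow_mem_pow hXi _
    have hzero : Ideal.Quotient.mk (varIdeal m ^ (l + 1)) f * Ideal.Quotient.mk (varIdeal m ^ (l + 1)) (X i ^ (k + 1)) = 0 := by
      have := Submodule.mem_annihilator.mp hx (Ideal.Quotient.mk (varIdeal m ^ (l + 1)) (X i ^ (k + 1)))
        (by rw [hmap]; exact Ideal.mem_map_of_mem _ hXmem)
      simpa [smul_eq_mul] using this
    have hprod : f * X i ^ (k + 1) ∈ varIdeal m ^ (l + 1) := by
      rw [← Ideal.Quotient.eq_zero_iff_mem, map_mul]
      exact hzero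
    have hco : (f * X i ^ (k + 1)).coeff (d + Finsupp.single i (k + 1)) = f.coeff d := by
      rw [X_pow_eq_monomial, coeff_mul_monomial]
      simp
    have hdsupp : d + Finsupp.single i (k + 1) ∈ (f * X i ^ (k + 1)).support := by
      rw [MvPolynomial.mem_support_iff, hco]
      exact MvPolynomial.mem_support_iff.mp hd
    have := mem_varIdeal_pow.mp hprod _ hdsupp
    rw [deg_add, deg_single] at this
    omega
  · intro x hx
    rw [Submodule.mem_annihilator]
    intro y hy
    have h : (l - k) + (k + 1) = l + 1 := by omega
    have : x * y ∈ truncMaxIdeal m l ^ (l + 1) := by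
      have h2 : x * y ∈ truncMaxIdeal m l ^ (l - k) * truncMaxIdeal m l ^ (k + 1) :=
        Ideal.mul_mem_mul hx hy
      have h3 : truncMaxIdeal m l ^ (l - k) * truncMaxIdeal m l ^ (k + 1) =
          truncMaxIdeal m l ^ (l + 1) :=
        by rw [← Ideal.IsTwoSided.pow_add, h]
      rwa [h3] at h2
    rw [hmap, Ideal.map_quotient_self] at this
    simpa [smul_eq_mul] using this

end
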